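/- For any integer n ≥ 1 and real μ > 0: Σ_{a=1}^n C(n,a) ((a-1)!/μ^a) Σ_{j=0}^{a-1} (-μ)^j/j! = Σ_{l=1}^n (l-1)! μ^{-l}. -/

import Mathlib

/-- Truncated alternating sum vanishing lemma. -/
lemma sum_vanish : ∀ n m : ℕ, m < n →
    ∑ j ∈ Finset.range (n + 1 - m), (-1 : ℤ) ^ j * (n.choose (j + m)) *
      ((j + m).descFactorial m) = 0 := by
  intro n
  induction n with
  | zero => intro m hm; omega
  | succ n ih =>
    intro m hm
    match m with
    | 0 =>
      simpa using Int.alternating_sum_range_choose_of_ne (Nat.succ_ne_zero n)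
    | m + 1 =>
      have hm' : m < n := by omega
      have hr : n + 1 + 1 - (m + 1) = n + 1 - m := by omega
      rw [hr]
      have key : ∀ j : ℕ, (-1 : ℤ) ^ j * ((n + 1).choose (j + (m + 1))) *
          ((j + (m + 1)).descFactorial (m + 1)) =
          (n + 1) * ((-1 : ℤ) ^ j * (n.choose (j + m)) * ((j + m).descFactorial m)) := by
        intro j
        have h1 : (j + m + 1).descFactorial (m + 1) = (j + m + 1) * (j + m).descFactorial m :=
          Nat.succ_descFactorial_succ (j + m) m
        have h2 : (n + 1) * n.choose (j + m) = (n + 1).choose (j + m + 1) * (j + m + 1) :=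
          Nat.add_one_mul_choose_eq n (j + m)
        have h2' : ((n + 1 : ℤ)) * (n.choose (j + m) : ℤ) =
            ((n + 1).choose (j + m + 1) : ℤ) * ((j + m + 1 : ℤ)) := by exact_mod_cast h2
        show (-1 : ℤ) ^ j * ((n + 1).choose (j + m + 1)) * ((j + m + 1).descFactorial (m + 1)) = _
        rw [h1]
        push_cast
        linear_combination (-((-1 : ℤ) ^ j) * ((j + m).descFactorial m : ℤ)) * h2'
      calc ∑ j ∈ Finset.range (n + 1 - m), (-1 : ℤ) ^ j * ((n + 1).choose (j + (m + 1))) *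
            ((j + (m + 1)).descFactorial (m + 1))
          = ∑ j ∈ Finset.range (n + 1 - m), (n + 1) *
            ((-1 : ℤ) ^ j * (n.choose (j + m)) * ((j + m).descFactorial m)) := by
            exact Finset.sum_congr rfl fun j _ => key j
        _ = (n + 1) * ∑ j ∈ Finset.range (n + 1 - m), (-1 : ℤ) ^ j * (n.choose (j + m)) *
            ((j + m).descFactorial m) := by rw [Finset.mul_sum]
        _ = 0 := by rw [ih m hm', mul_zero]

/-- The key combinatorial identity. -/
lemma key_identity : ∀ n l : ℕ, l < n →
    ∑ j ∈ Finset.range (n - l), (-1 : ℤ) ^ j * (n.choose (j + l + 1)) *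
      ((j + l).descFactorial l) = l.factorial := by
  intro n
  induction n with
  | zero => intro l hl; omega
  | succ n ih =>
    intro l hl
    rcases eq_or_lt_of_le (Nat.lt_succ_iff.mp hl) with h | h
    · subst h
      simp [Nat.descFactorial_self]
    · -- l < n
      have hr : n + 1 - l = (n - l) + 1 := by omega
      rw [hr]
      have pascal : ∀ j : ℕ, ((n + 1).choose (j + l + 1) : ℤ) =
          (n.choose (j + l) : ℤ) + (n.choose (j + l + 1) : ℤ) := by
        intro j
        exact_mod_cast congrArg Nat.cast (Nat.choose_succ_succ n (j + l))
      have split : ∑ j ∈ Finset.range ((n - l) + 1), (-1 : ℤ) ^ j * ((n + 1).choose (j + l + 1)) *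
            ((j + l).descFactorial l) =
          (∑ j ∈ Finset.range ((n - l) + 1), (-1 : ℤ) ^ j * (n.choose (j + l)) *
            ((j + l).descFactorial l)) +
          (∑ j ∈ Finset.range ((n - l) + 1), (-1 : ℤ) ^ j * (n.choose (j + l + 1)) *
            ((j + l).descFactorial l)) := by
        rw [← Finset.sum_add_distrib]
        refine Finset.sum_congr rfl fun j _ => ?_
        rw [pascal j]; ring
      rw [split]
      have first : ∑ j ∈ Finset.range ((n - l) + 1), (-1 : ℤ) ^ j * (n.choose (j + l)) *
          ((j + l).descFactorial l) = 0 := by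
        have := sum_vanish n l h
        have hr2 : n + 1 - l = (n - l) + 1 := by omega
        rwa [hr2] at this
      have second : ∑ j ∈ Finset.range ((n - l) + 1), (-1 : ℤ) ^ j * (n.choose (j + l + 1)) *
          ((j + l).descFactorial l) = l.factorial := by
        rw [Finset.sum_range_succ]
        have hz : n.choose ((n - l) + l + 1) = 0 := by
          apply Nat.choose_eq_zero_of_lt; omega
        rw [hz]
        simpa using ih l h
      rw [first, second, zero_add]

/-- `Σ_{a=1}^n C(n,a) ((a-1)!/μ^a) Σ_{j=0}^{a-1} (-μ)^j/j! = Σ_{l=1}^n (l-1)! μ^{-l}`. -/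
theorem double_sum_simplification (n : ℕ) (hn : 1 ≤ n) (μ : ℝ) (hμ : 0 < μ) :
    ∑ a ∈ Finset.Icc 1 n, (n.choose a : ℝ) * (((a - 1).factorial : ℝ) / μ ^ a) *
        ∑ j ∈ Finset.range a, (-μ) ^ j / (j.factorial : ℝ) =
      ∑ l ∈ Finset.Icc 1 n, ((l - 1).factorial : ℝ) / μ ^ l := by
  have hμ' : μ ≠ 0 := ne_of_gt hμ
  -- Step 1: distribute into a double sum
  have step1 : ∑ a ∈ Finset.Icc 1 n, (n.choose a : ℝ) * (((a - 1).factorial : ℝ) / μ ^ a) *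
        ∑ j ∈ Finset.range a, (-μ) ^ j / (j.factorial : ℝ) =
      ∑ a ∈ Finset.Icc 1 n, ∑ j ∈ Finset.range a,
        (n.choose a : ℝ) * (((a - 1).factorial : ℝ) / μ ^ a) * ((-μ) ^ j / (j.factorial : ℝ)) := by
    exact Finset.sum_congr rfl fun a _ => Finset.mul_sum _ _ _
  rw [step1]
  -- Step 2: reindex (a, j) ↦ (l, j) with l = a - j
  have step2 : ∑ a ∈ Finset.Icc 1 n, ∑ j ∈ Finset.range a,
        (n.choose a : ℝ) * (((a - 1).factorial : ℝ) / μ ^ a) * ((-μ) ^ j / (j.factorial : ℝ)) =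
      ∑ l ∈ Finset.Icc 1 n, ∑ j ∈ Finset.range (n + 1 - l),
        (n.choose (j + l) : ℝ) * (((j + l - 1).factorial : ℝ) / μ ^ (j + l)) *
          ((-μ) ^ j / (j.factorial : ℝ)) := by
    rw [Finset.sum_sigma', Finset.sum_sigma']
    refine Finset.sum_nbij' (fun p => ⟨p.1 - p.2, p.2⟩) (fun p => ⟨p.2 + p.1, p.2⟩) ?_ ?_ ?_ ?_ ?_
    · rintro ⟨a, j⟩ hp
      simp only [Finset.mem_sigma, Finset.mem_Icc, Finset.mem_range] at hp ⊢
      omega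
    · rintro ⟨l, j⟩ hp
      simp only [Finset.mem_sigma, Finset.mem_Icc, Finset.mem_range] at hp ⊢
      omega
    · rintro ⟨a, j⟩ hp
      simp only [Finset.mem_sigma, Finset.mem_Icc, Finset.mem_range] at hp
      simp only [Sigma.mk.inj_iff]
      constructor
      · omega
      · exact HEq.rfl
    · rintro ⟨l, j⟩ hp
      simp only [Finset.mem_sigma, Finset.mem_Icc, Finset.mem_range] at hp
      simp only [Sigma.mk.inj_iff]
      constructor
      · omega
      · exact HEq.rfl
    · rintro ⟨a, j⟩ hp
      simp only [Finset.mem_sigma, Finset.mem_Icc, Finset.mem_range] at hp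
      have : j + (a - j) = a := by omega
      rw [this]
  rw [step2]
  -- Step 3: evaluate each inner sum
  refine Finset.sum_congr rfl fun l hl => ?_
  simp only [Finset.mem_Icc] at hl
  obtain ⟨hl1, hl2⟩ := hl
  obtain ⟨l', rfl⟩ : ∃ l', l = l' + 1 := ⟨l - 1, by omega⟩
  have hrange : n + 1 - (l' + 1) = n - l' := by omega
  rw [hrange]
  have hl'n : l' < n := by omega
  have key := key_identity n l' hl'n
  -- cast key to ℝ
  have keyR : ∑ j ∈ Finset.range (n - l'), (-1 : ℝ) ^ j * (n.choose (j + l' + 1)) *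
      ((j + l').descFactorial l') = (l'.factorial : ℝ) := by
    exact_mod_cast congrArg (Int.cast : ℤ → ℝ) key
  have term_eq : ∀ j : ℕ, (n.choose (j + (l' + 1)) : ℝ) *
        (((j + (l' + 1) - 1).factorial : ℝ) / μ ^ (j + (l' + 1))) *
        ((-μ) ^ j / (j.factorial : ℝ)) =
      ((-1 : ℝ) ^ j * (n.choose (j + l' + 1)) * ((j + l').descFactorial l')) / μ ^ (l' + 1) := by
    intro j
    have h1 : j + (l' + 1) - 1 = j + l' := by omega
    have h2 : (j + l').factorial = j.factorial * (j + l').descFactorial l' := by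
      have := Nat.factorial_mul_descFactorial (show l' ≤ j + l' by omega)
      have h3 : j + l' - l' = j := by omega
      rw [h3] at this
      omega
    rw [h1, h2]
    have hjf : (j.factorial : ℝ) ≠ 0 := Nat.cast_ne_zero.mpr (Nat.factorial_ne_zero j)
    have hμp : μ ^ (j + (l' + 1)) = μ ^ j * μ ^ (l' + 1) := by rw [pow_add]
    rw [hμp, neg_pow]
    push_cast
    field_simp
    ring
  calc ∑ j ∈ Finset.range (n - l'), (n.choose (j + (l' + 1)) : ℝ) *
        (((j + (l' + 1) - 1).factorial : ℝ) / μ ^ (j + (l' + 1))) *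
        ((-μ) ^ j / (j.factorial : ℝ))
      = ∑ j ∈ Finset.range (n - l'), ((-1 : ℝ) ^ j * (n.choose (j + l' + 1)) *
          ((j + l').descFactorial l')) / μ ^ (l' + 1) := by
        exact Finset.sum_congr rfl fun j _ => term_eq j
    _ = (∑ j ∈ Finset.range (n - l'), (-1 : ℝ) ^ j * (n.choose (j + l' + 1)) *
          ((j + l').descFactorial l')) / μ ^ (l' + 1) := by rw [Finset.sum_div]
    _ = ((l' + 1 - 1).factorial : ℝ) / μ ^ (l' + 1) := by rw [keyR]; norm_num
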